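/- For semirings S₁ and S₂, the product semiring S₁ × S₂ is a left CP-semiring if and only if both S₁ and S₂ are left CP-semirings. -/

import Mathlib

universe u

/-- A left CP-semiring: every cyclic left `S`-semimodule is projective. -/
def IsLeftCPSemiring (S : Type u) [Semiring S] : Prop :=
  ∀ (M : Type u) [AddCommMonoid M] [Module S M],
    (∃ m : M, Submodule.span S {m} = ⊤) → Module.Projective S M

theorem IsLeftCPSemiring.of_surjective {R T : Type u} [Semiring R] [Semiring T]
    (f : R →+* T) (hf : Function.Surjective f) (hR : IsLeftCPSemiring R) :
    IsLeftCPSemiring T := by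
  intro M _ _ ⟨m, hm⟩
  letI : Module R M := Module.compHom M f
  have hsmul : ∀ (r : R) (x : M), r • x = f r • x := fun _ _ => rfl
  have hspan : Submodule.span R {m} = ⊤ := by
    rw [Submodule.eq_top_iff']
    intro x
    have hx : x ∈ Submodule.span T {m} := hm ▸ Submodule.mem_top
    obtain ⟨a, ha⟩ := Submodule.mem_span_singleton.mp hx
    obtain ⟨r, rfl⟩ := hf a
    exact Submodule.mem_span_singleton.mpr ⟨r, by rw [hsmul, ha]⟩
  obtain ⟨s, hs⟩ := Module.projective_def.mp (hR M ⟨m, hspan⟩)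
  refine Module.projective_def.mpr ⟨⟨⟨fun x => (s x).mapRange f f.map_zero, ?_⟩, ?_⟩, ?_⟩
  · intro x y
    rw [map_add]
    exact Finsupp.mapRange_add f.map_add _ _
  · intro a x
    obtain ⟨r, rfl⟩ := hf a
    have h1 : s (f r • x) = r • s x := by rw [← hsmul, map_smul]
    simp only [RingHom.id_apply, h1]
    ext y
    simp [Finsupp.mapRange_apply]
  · intro x
    show Finsupp.linearCombination T id ((s x).mapRange f f.map_zero) = x
    rw [Finsupp.linearCombination_apply]
    have h1 : (Finsupp.mapRange (⇑f) f.map_zero (s x)).sum (fun i a => a • id i) =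
        (s x).sum (fun i b => f b • id i) :=
      Finsupp.sum_mapRange_index (fun _ => zero_smul _ _)
    rw [h1]
    have h2 := hs x
    rw [Finsupp.linearCombination_apply] at h2
    exact h2

theorem IsLeftCPSemiring.prod {S₁ S₂ : Type u} [Semiring S₁] [Semiring S₂]
    (h₁ : IsLeftCPSemiring S₁) (h₂ : IsLeftCPSemiring S₂) :
    IsLeftCPSemiring (S₁ × S₂) := by
  intro M _ _ ⟨m, hm⟩
  -- the two "corner" submonoids
  let N₁ : AddSubmonoid M :=
    { carrier := {x | ((1, 0) : S₁ × S₂) • x = x}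
      zero_mem' := smul_zero _
      add_mem' := fun hx hy => by simp only [Set.mem_setOf_eq, smul_add] at *; rw [hx, hy] }
  let N₂ : AddSubmonoid M :=
    { carrier := {x | ((0, 1) : S₁ × S₂) • x = x}
      zero_mem' := smul_zero _
      add_mem' := fun hx hy => by simp only [Set.mem_setOf_eq, smul_add] at *; rw [hx, hy] }
  letI : SMul S₁ N₁ := ⟨fun a x => ⟨((a, 0) : S₁ × S₂) • x.1, by
    show ((1, 0) : S₁ × S₂) • _ = _
    rw [smul_smul]; congr 1; simp [Prod.ext_iff]⟩⟩
  letI : SMul S₂ N₂ := ⟨fun a x => ⟨((0, a) : S₁ × S₂) • x.1, by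
    show ((0, 1) : S₁ × S₂) • _ = _
    rw [smul_smul]; congr 1; simp [Prod.ext_iff]⟩⟩
  have sm₁ : ∀ (a : S₁) (x : N₁), (a • x).1 = ((a, 0) : S₁ × S₂) • x.1 := fun _ _ => rfl
  have sm₂ : ∀ (a : S₂) (x : N₂), (a • x).1 = ((0, a) : S₁ × S₂) • x.1 := fun _ _ => rfl
  letI : Module S₁ N₁ :=
    { one_smul := fun x => Subtype.ext x.2
      mul_smul := fun a b x => Subtype.ext (by
        simp only [sm₁, smul_smul]; congr 1; simp [Prod.ext_iff])
      smul_zero := fun a => Subtype.ext (by simp [sm₁])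
      smul_add := fun a x y => Subtype.ext (by simp [sm₁, smul_add])
      add_smul := fun a b x => Subtype.ext (by
        simp only [sm₁]
        rw [show ((a + b, 0) : S₁ × S₂) = (a, 0) + (b, 0) by simp [Prod.ext_iff], add_smul]
        rfl)
      zero_smul := fun x => Subtype.ext (by
        simp only [sm₁]
        rw [show ((0, 0) : S₁ × S₂) = 0 from rfl, zero_smul]; rfl) }
  letI : Module S₂ N₂ :=
    { one_smul := fun x => Subtype.ext x.2
      mul_smul := fun a b x => Subtype.ext (by
        simp only [sm₂, smul_smul]; congr 1; simp [Prod.ext_iff])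
      smul_zero := fun a => Subtype.ext (by simp [sm₂])
      smul_add := fun a x y => Subtype.ext (by simp [sm₂, smul_add])
      add_smul := fun a b x => Subtype.ext (by
        simp only [sm₂]
        rw [show ((0, a + b) : S₁ × S₂) = (0, a) + (0, b) by simp [Prod.ext_iff], add_smul]
        rfl)
      zero_smul := fun x => Subtype.ext (by
        simp only [sm₂]
        rw [show ((0, 0) : S₁ × S₂) = 0 from rfl, zero_smul]; rfl) }
  -- generators
  have e₁e₁ : ((1, 0) : S₁ × S₂) * (1, 0) = (1, 0) := by simp [Prod.ext_iff]
  have e₂e₂ : ((0, 1) : S₁ × S₂) * (0, 1) = (0, 1) := by simp [Prod.ext_iff]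
  let m₁ : N₁ := ⟨((1, 0) : S₁ × S₂) • m, by show _ • _ = _; rw [smul_smul, e₁e₁]⟩
  let m₂ : N₂ := ⟨((0, 1) : S₁ × S₂) • m, by show _ • _ = _; rw [smul_smul, e₂e₂]⟩
  have hm' : ∀ x : M, ∃ c : S₁ × S₂, c • m = x := fun x =>
    Submodule.mem_span_singleton.mp (hm ▸ Submodule.mem_top)
  have span₁ : Submodule.span S₁ {m₁} = ⊤ := by
    rw [Submodule.eq_top_iff']
    intro x
    obtain ⟨c, hc⟩ := hm' x.1
    refine Submodule.mem_span_singleton.mpr ⟨c.1, Subtype.ext ?_⟩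
    rw [sm₁]
    show ((c.1, 0) : S₁ × S₂) • (((1, 0) : S₁ × S₂) • m) = _
    rw [smul_smul, show ((c.1, 0) : S₁ × S₂) * (1, 0) = (1, 0) * c by simp [Prod.ext_iff],
      ← smul_smul, hc]
    exact x.2
  have span₂ : Submodule.span S₂ {m₂} = ⊤ := by
    rw [Submodule.eq_top_iff']
    intro x
    obtain ⟨c, hc⟩ := hm' x.1
    refine Submodule.mem_span_singleton.mpr ⟨c.2, Subtype.ext ?_⟩
    rw [sm₂]
    show ((0, c.2) : S₁ × S₂) • (((0, 1) : S₁ × S₂) • m) = _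
    rw [smul_smul, show ((0, c.2) : S₁ × S₂) * (0, 1) = (0, 1) * c by simp [Prod.ext_iff],
      ← smul_smul, hc]
    exact x.2
  obtain ⟨s₁, hs₁⟩ := Module.projective_def.mp (h₁ N₁ ⟨m₁, span₁⟩)
  obtain ⟨s₂, hs₂⟩ := Module.projective_def.mp (h₂ N₂ ⟨m₂, span₂⟩)
  -- embeddings of finsupps
  have g₁_add : ∀ x y : S₁, (fun a : S₁ => ((a, 0) : S₁ × S₂)) (x + y) =
      (fun a : S₁ => ((a, 0) : S₁ × S₂)) x + (fun a : S₁ => ((a, 0) : S₁ × S₂)) y :=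
    fun x y => by simp [Prod.ext_iff]
  have g₂_add : ∀ x y : S₂, (fun a : S₂ => ((0, a) : S₁ × S₂)) (x + y) =
      (fun a : S₂ => ((0, a) : S₁ × S₂)) x + (fun a : S₂ => ((0, a) : S₁ × S₂)) y :=
    fun x y => by simp [Prod.ext_iff]
  let ι₁ : (N₁ →₀ S₁) → (M →₀ (S₁ × S₂)) := fun F =>
    (F.mapRange (fun a : S₁ => ((a, 0) : S₁ × S₂)) rfl).mapDomain Subtype.val
  let ι₂ : (N₂ →₀ S₂) → (M →₀ (S₁ × S₂)) := fun F =>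
    (F.mapRange (fun a : S₂ => ((0, a) : S₁ × S₂)) rfl).mapDomain Subtype.val
  let π₁ : M → N₁ := fun x => ⟨((1, 0) : S₁ × S₂) • x, by show _ • _ = _; rw [smul_smul, e₁e₁]⟩
  let π₂ : M → N₂ := fun x => ⟨((0, 1) : S₁ × S₂) • x, by show _ • _ = _; rw [smul_smul, e₂e₂]⟩
  have ι₁_add : ∀ F G, ι₁ (F + G) = ι₁ F + ι₁ G := fun F G => by
    simp only [ι₁]
    rw [Finsupp.mapRange_add g₁_add, Finsupp.mapDomain_add]
  have ι₂_add : ∀ F G, ι₂ (F + G) = ι₂ F + ι₂ G := fun F G => by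
    simp only [ι₂]
    rw [Finsupp.mapRange_add g₂_add, Finsupp.mapDomain_add]
  have ι₁_smul : ∀ (c : S₁ × S₂) (F : N₁ →₀ S₁), ι₁ (c.1 • F) = c • ι₁ F := by
    intro c F
    simp only [ι₁]
    rw [← Finsupp.mapDomain_smul]
    congr 1
    ext y <;>
      simp [Finsupp.mapRange_apply, Finsupp.smul_apply, smul_eq_mul, Prod.fst_mul,
        Prod.snd_mul]
  have ι₂_smul : ∀ (c : S₁ × S₂) (F : N₂ →₀ S₂), ι₂ (c.2 • F) = c • ι₂ F := by
    intro c F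
    simp only [ι₂]
    rw [← Finsupp.mapDomain_smul]
    congr 1
    ext y <;>
      simp [Finsupp.mapRange_apply, Finsupp.smul_apply, smul_eq_mul, Prod.fst_mul,
        Prod.snd_mul]
  have tot₁ : ∀ F : N₁ →₀ S₁,
      Finsupp.linearCombination (S₁ × S₂) id (ι₁ F) =
        ((Finsupp.linearCombination S₁ id F : N₁) : M) := by
    intro F
    rw [Finsupp.linearCombination_apply, Finsupp.linearCombination_apply]
    show (Finsupp.mapDomain (Subtype.val : N₁ → M) (Finsupp.mapRange (fun a : S₁ => ((a, 0) : S₁ × S₂)) rfl F)).sum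
        (fun i a => a • id i) = _
    have step1 : (Finsupp.mapDomain (Subtype.val : N₁ → M) (Finsupp.mapRange (fun a : S₁ => ((a, 0) : S₁ × S₂)) rfl F)).sum
        (fun i a => a • id i) =
        (Finsupp.mapRange (fun a : S₁ => ((a, 0) : S₁ × S₂)) rfl F).sum (fun i a => a • id (i : M)) :=
      Finsupp.sum_mapDomain_index (fun _ => zero_smul _ _) (fun b c d => add_smul c d (id b))
    have step2 : (Finsupp.mapRange (fun a : S₁ => ((a, 0) : S₁ × S₂)) rfl F).sum (fun i a => a • id (i : M)) =
        F.sum (fun i a => ((a, 0) : S₁ × S₂) • id (i : M)) :=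
      Finsupp.sum_mapRange_index (fun _ => zero_smul _ _)
    rw [step1, step2, Finsupp.sum, Finsupp.sum, AddSubmonoid.coe_finset_sum]
    exact Finset.sum_congr rfl (fun i _ => rfl)
  have tot₂ : ∀ F : N₂ →₀ S₂,
      Finsupp.linearCombination (S₁ × S₂) id (ι₂ F) =
        ((Finsupp.linearCombination S₂ id F : N₂) : M) := by
    intro F
    rw [Finsupp.linearCombination_apply, Finsupp.linearCombination_apply]
    show (Finsupp.mapDomain (Subtype.val : N₂ → M) (Finsupp.mapRange (fun a : S₂ => ((0, a) : S₁ × S₂)) rfl F)).sum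
        (fun i a => a • id i) = _
    have step1 : (Finsupp.mapDomain (Subtype.val : N₂ → M) (Finsupp.mapRange (fun a : S₂ => ((0, a) : S₁ × S₂)) rfl F)).sum
        (fun i a => a • id i) =
        (Finsupp.mapRange (fun a : S₂ => ((0, a) : S₁ × S₂)) rfl F).sum (fun i a => a • id (i : M)) :=
      Finsupp.sum_mapDomain_index (fun _ => zero_smul _ _) (fun b c d => add_smul c d (id b))
    have step2 : (Finsupp.mapRange (fun a : S₂ => ((0, a) : S₁ × S₂)) rfl F).sum (fun i a => a • id (i : M)) =
        F.sum (fun i a => ((0, a) : S₁ × S₂) • id (i : M)) :=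
      Finsupp.sum_mapRange_index (fun _ => zero_smul _ _)
    rw [step1, step2, Finsupp.sum, Finsupp.sum, AddSubmonoid.coe_finset_sum]
    exact Finset.sum_congr rfl (fun i _ => rfl)
  have π₁_add : ∀ x y, π₁ (x + y) = π₁ x + π₁ y := fun x y =>
    Subtype.ext (by simp [π₁, smul_add])
  have π₂_add : ∀ x y, π₂ (x + y) = π₂ x + π₂ y := fun x y =>
    Subtype.ext (by simp [π₂, smul_add])
  have π₁_smul : ∀ (c : S₁ × S₂) (x : M), π₁ (c • x) = c.1 • π₁ x := by
    intro c x
    refine Subtype.ext ?_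
    rw [sm₁]
    show ((1, 0) : S₁ × S₂) • c • x = ((c.1, 0) : S₁ × S₂) • ((1, 0) : S₁ × S₂) • x
    rw [smul_smul, smul_smul]
    congr 1
    simp [Prod.ext_iff]
  have π₂_smul : ∀ (c : S₁ × S₂) (x : M), π₂ (c • x) = c.2 • π₂ x := by
    intro c x
    refine Subtype.ext ?_
    rw [sm₂]
    show ((0, 1) : S₁ × S₂) • c • x = ((0, c.2) : S₁ × S₂) • ((0, 1) : S₁ × S₂) • x
    rw [smul_smul, smul_smul]
    congr 1
    simp [Prod.ext_iff]
  refine Module.projective_def.mpr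
    ⟨⟨⟨fun x => ι₁ (s₁ (π₁ x)) + ι₂ (s₂ (π₂ x)), ?_⟩, ?_⟩, ?_⟩
  · intro x y
    rw [π₁_add, π₂_add, map_add, map_add, ι₁_add, ι₂_add]
    abel
  · intro c x
    dsimp only [RingHom.id_apply]
    rw [π₁_smul, π₂_smul, map_smul, map_smul, ι₁_smul, ι₂_smul, smul_add]
  · intro x
    simp only [LinearMap.coe_mk, AddHom.coe_mk, map_add, tot₁, tot₂]
    rw [hs₁ (π₁ x), hs₂ (π₂ x)]
    show (π₁ x).1 + (π₂ x).1 = x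
    show ((1, 0) : S₁ × S₂) • x + ((0, 1) : S₁ × S₂) • x = x
    rw [← add_smul, show ((1, 0) : S₁ × S₂) + (0, 1) = 1 by simp [Prod.ext_iff], one_smul]

/-- a product semiring `S₁ × S₂` is a left CP-semiring iff both
`S₁` and `S₂` are left CP-semirings. -/
theorem prod_isLeftCPSemiring_iff
    (S₁ : Type u) (S₂ : Type u) [Semiring S₁] [Semiring S₂] :
    IsLeftCPSemiring (S₁ × S₂) ↔ IsLeftCPSemiring S₁ ∧ IsLeftCPSemiring S₂ := by
  constructor
  · intro h
    exact ⟨h.of_surjective (RingHom.fst S₁ S₂) Prod.fst_surjective,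
      h.of_surjective (RingHom.snd S₁ S₂) Prod.snd_surjective⟩
  · rintro ⟨h₁, h₂⟩
    exact h₁.prod h₂
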